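/- Let Ω = {z ∈ ℂⁿ : φ(z) < 0}, where φ(z) = ∑_{i=1}^n ( −arctan(Im(zᵢ) + tan(nπ/(2n+2))) + nπ/(2n+2) ). Then for every z ∈ Ω and every j ∈ {1,…,n}: −arctan(Im(z_j) + tan(nπ/(2n+2))) < −π/(2n+2); in particular Im(z_j) + tan(nπ/(2n+2)) > tan(π/(2n+2)) > 0, so the complex Hessian (φ_{i\bar j}) is positive semidefinite on Ω. -/

import Mathlib

open scoped ComplexOrder

/-- On `Ω = {φ < 0}` with
`φ(z) = ∑ᵢ (−arctan(Im zᵢ + tan(nπ/(2n+2))) + nπ/(2n+2))`, each summand satisfies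
`−arctan(Im z_j + tan(nπ/(2n+2))) < −π/(2n+2)`, hence
`Im z_j + tan(nπ/(2n+2)) > tan(π/(2n+2)) > 0`, and the complex Hessian of `φ` is
positive semidefinite on `Ω`. -/
theorem stmt6 (n : ℕ) (hn : 1 ≤ n) (φ : (Fin n → ℂ) → ℝ)
    (hφ : φ = fun z => ∑ i,
      (-Real.arctan ((z i).im + Real.tan ((n : ℝ) * Real.pi / (2 * (n : ℝ) + 2)))
        + (n : ℝ) * Real.pi / (2 * (n : ℝ) + 2)))
    (z : Fin n → ℂ) (hz : φ z < 0) :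
    (∀ j : Fin n,
      -Real.arctan ((z j).im + Real.tan ((n : ℝ) * Real.pi / (2 * (n : ℝ) + 2)))
          < -(Real.pi / (2 * (n : ℝ) + 2))
      ∧ Real.tan (Real.pi / (2 * (n : ℝ) + 2))
          < (z j).im + Real.tan ((n : ℝ) * Real.pi / (2 * (n : ℝ) + 2))
      ∧ 0 < Real.tan (Real.pi / (2 * (n : ℝ) + 2)))
    ∧ (Matrix.of fun i j : Fin n =>
        (if i = j then
          ((((z i).im + Real.tan ((n : ℝ) * Real.pi / (2 * (n : ℝ) + 2))) /
            (2 * (1 + ((z i).im + Real.tan ((n : ℝ) * Real.pi / (2 * (n : ℝ) + 2))) ^ 2) ^ 2) : ℝ) : ℂ)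
        else 0)).PosSemidef := by
  have hπ := Real.pi_pos
  have hn' : (1 : ℝ) ≤ (n : ℝ) := by exact_mod_cast hn
  set c : ℝ := (n : ℝ) * Real.pi / (2 * (n : ℝ) + 2) with hc
  set b : ℝ := Real.pi / (2 * (n : ℝ) + 2) with hb
  have hD : (0 : ℝ) < 2 * (n : ℝ) + 2 := by linarith
  have hbpos : 0 < b := by positivity
  have hcb : c + b = Real.pi / 2 := by
    rw [hc, hb]; field_simp
  have hblt : b < Real.pi / 2 := by
    rw [hb]; rw [div_lt_div_iff₀ hD (by norm_num)]; nlinarith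
  set x : Fin n → ℝ := fun i => (z i).im + Real.tan c with hx
  set t : Fin n → ℝ := fun i => -Real.arctan (x i) + c with ht
  have hsum : ∑ i, t i < 0 := by
    rw [hφ] at hz; exact hz
  have hlow : ∀ i, -b < t i := by
    intro i
    have := Real.arctan_lt_pi_div_two (x i)
    simp only [ht]
    linarith [hcb]
  -- main bound
  have key : ∀ j : Fin n, -Real.arctan (x j) < -b := by
    intro j
    have hsplit : t j + ∑ i ∈ Finset.univ.erase j, t i = ∑ i, t i :=
      Finset.add_sum_erase _ _ (Finset.mem_univ j)
    have hcard : (Finset.univ.erase j).card = n - 1 := by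
      simp [Finset.card_erase_of_mem]
    have hge : ((n - 1 : ℕ) : ℝ) * (-b) ≤ ∑ i ∈ Finset.univ.erase j, t i := by
      have h := Finset.card_nsmul_le_sum (Finset.univ.erase j) t (-b)
        (fun i _ => le_of_lt (hlow i))
      rw [hcard, nsmul_eq_mul] at h
      exact h
    have hcast : ((n - 1 : ℕ) : ℝ) = (n : ℝ) - 1 := by
      have : 1 ≤ n := hn
      push_cast [Nat.cast_sub this]
      ring
    rw [hcast] at hge
    have htj : t j < ((n : ℝ) - 1) * b := by nlinarith
    have hnb : (n : ℝ) * b = c := by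
      rw [hb, hc]; ring
    have : -Real.arctan (x j) + c < ((n : ℝ) - 1) * b := by
      simpa [ht] using htj
    nlinarith
  have htanpos : 0 < Real.tan b := Real.tan_pos_of_pos_of_lt_pi_div_two hbpos hblt
  have hxgt : ∀ j, Real.tan b < x j := by
    intro j
    have h1 : b < Real.arctan (x j) := by linarith [key j]
    have h2 := Real.tan_lt_tan_of_lt_of_lt_pi_div_two (x := b) (y := Real.arctan (x j))
      (by linarith [Real.pi_div_two_pos]) (Real.arctan_lt_pi_div_two _) h1
    rwa [Real.tan_arctan] at h2
  constructor
  · intro j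
    exact ⟨key j, hxgt j, htanpos⟩
  · have hd : ∀ i, (0 : ℂ) ≤ ((x i / (2 * (1 + x i ^ 2) ^ 2) : ℝ) : ℂ) := by
      intro i
      rw [Complex.zero_le_real]
      have hxi : 0 < x i := lt_trans htanpos (hxgt i)
      positivity
    exact Matrix.posSemidef_diagonal_iff.mpr hd
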